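/- In the free associative K-algebra generated by symbols u_{0,l} (l ≠ 0), u_{1,n}, u_{-1,n} (n in Z), modulo the relations [u_{0,l}, u_{1,n}] = sgn(l)·u_{1,n+l}, [u_{0,l}, u_{-1,n}] = -sgn(l)·u_{-1,n+l}, [u_{0,l}, u_{0,k}] = 0, and [u_{1,n}, u_{-1,m}] ∈ span of monomials in the u_{0,l}, every element is a K-linear combination of monomials of the form (product of u_{1,*})·(product of u_{0,*})·(product of u_{-1,*}); i.e., the multiplication map from (subalgebra generated by u_{1,*}) ⊗ (subalgebra generated by u_{0,*}) ⊗ (subalgebra generated by u_{-1,*}) to the whole algebra is surjective. -/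

import Mathlib

/-- Triangular decomposition (surjectivity), Lemma 5.1 of the paper, valid for any
`K`-algebra `A` generated by families `u₁ = (u_{1,n})`, `u₀ = (u_{0,l})_{l≠0}`,
`u₋₁ = (u_{-1,n})` subject to the commutation properties
`[u_{0,l}, u_{1,n}] = sgn(l)·u_{1,n+l}`, `[u_{0,l}, u_{-1,n}] = -sgn(l)·u_{-1,n+l}`,
`[u_{0,l}, u_{0,k}] = 0`, and `[u_{1,n}, u_{-1,m}]` lying in the subalgebra generated
by the `u_{0,l}`: the multiplication map from
`(subalgebra gen. by u₁) ⊗ (subalgebra gen. by u₀) ⊗ (subalgebra gen. by u₋₁)` to `A`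
is surjective, i.e. the product of the corresponding `K`-submodules is all of `A`. -/
theorem triangular_decomposition_surjective (K A : Type*) [Field K] [Ring A]
    [Algebra K A] (u1 u0 um : ℤ → A)
    (hgen : Algebra.adjoin K
      (Set.range u1 ∪ u0 '' {l : ℤ | l ≠ 0} ∪ Set.range um) = ⊤)
    (h01 : ∀ l n : ℤ, l ≠ 0 →
      u0 l * u1 n - u1 n * u0 l = (Int.sign l : ℤ) • u1 (n + l))
    (h0m : ∀ l n : ℤ, l ≠ 0 →
      u0 l * um n - um n * u0 l = -((Int.sign l : ℤ) • um (n + l)))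
    (h00 : ∀ l k : ℤ, l ≠ 0 → k ≠ 0 → u0 l * u0 k = u0 k * u0 l)
    (h1m : ∀ n m : ℤ,
      u1 n * um m - um m * u1 n ∈ Algebra.adjoin K (u0 '' {l : ℤ | l ≠ 0})) :
    Subalgebra.toSubmodule (Algebra.adjoin K (Set.range u1)) *
        Subalgebra.toSubmodule (Algebra.adjoin K (u0 '' {l : ℤ | l ≠ 0})) *
        Subalgebra.toSubmodule (Algebra.adjoin K (Set.range um)) = ⊤ := by
  set SP := Algebra.adjoin K (Set.range u1) with hSP
  set SZ := Algebra.adjoin K (u0 '' {l : ℤ | l ≠ 0}) with hSZ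
  set SN := Algebra.adjoin K (Set.range um) with hSN
  set P := Subalgebra.toSubmodule SP with hPdef
  set Z := Subalgebra.toSubmodule SZ with hZdef
  set N := Subalgebra.toSubmodule SN with hNdef
  have memP : ∀ x : A, x ∈ P ↔ x ∈ SP := fun x => Iff.rfl
  have memZ : ∀ x : A, x ∈ Z ↔ x ∈ SZ := fun x => Iff.rfl
  have memN : ∀ x : A, x ∈ N ↔ x ∈ SN := fun x => Iff.rfl
  have oneP : (1 : A) ∈ P := SP.one_mem
  have oneZ : (1 : A) ∈ Z := SZ.one_mem
  have oneN : (1 : A) ∈ N := SN.one_mem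
  -- Step 1: commutator of u0 l with elements of SP lies in SP
  have comm1 : ∀ l : ℤ, l ≠ 0 → ∀ p ∈ SP, u0 l * p - p * u0 l ∈ SP := by
    intro l hl p hp
    induction hp using Algebra.adjoin_induction with
    | mem x hx =>
      obtain ⟨n, rfl⟩ := hx
      rw [h01 l n hl]
      exact zsmul_mem (Algebra.subset_adjoin (Set.mem_range_self (n + l))) _
    | algebraMap r =>
      rw [Algebra.commutes r (u0 l), sub_self]
      exact SP.zero_mem
    | add x y hx hy ihx ihy =>
      have h : u0 l * (x + y) - (x + y) * u0 l
          = (u0 l * x - x * u0 l) + (u0 l * y - y * u0 l) := by noncomm_ring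
      rw [h]; exact add_mem ihx ihy
    | mul x y hx hy ihx ihy =>
      have h : u0 l * (x * y) - (x * y) * u0 l
          = (u0 l * x - x * u0 l) * y + x * (u0 l * y - y * u0 l) := by noncomm_ring
      rw [h]; exact add_mem (mul_mem ihx hy) (mul_mem hx ihy)
  -- Step 2: commutator of u0 l with elements of SN lies in SN
  have comm2 : ∀ l : ℤ, l ≠ 0 → ∀ q ∈ SN, q * u0 l - u0 l * q ∈ SN := by
    intro l hl q hq
    induction hq using Algebra.adjoin_induction with
    | mem x hx =>
      obtain ⟨n, rfl⟩ := hx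
      have h : um n * u0 l - u0 l * um n = (Int.sign l : ℤ) • um (n + l) := by
        have := h0m l n hl
        have h2 : um n * u0 l - u0 l * um n = -(u0 l * um n - um n * u0 l) := by noncomm_ring
        rw [h2, this, neg_neg]
      rw [h]
      exact zsmul_mem (Algebra.subset_adjoin (Set.mem_range_self (n + l))) _
    | algebraMap r =>
      rw [← Algebra.commutes r (u0 l), sub_self]
      exact SN.zero_mem
    | add x y hx hy ihx ihy =>
      have h : (x + y) * u0 l - u0 l * (x + y)
          = (x * u0 l - u0 l * x) + (y * u0 l - u0 l * y) := by noncomm_ring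
      rw [h]; exact add_mem ihx ihy
    | mul x y hx hy ihx ihy =>
      have h : (x * y) * u0 l - u0 l * (x * y)
          = x * (y * u0 l - u0 l * y) + (x * u0 l - u0 l * x) * y := by noncomm_ring
      rw [h]; exact add_mem (mul_mem hx ihy) (mul_mem ihx hy)
  -- Z * P ≤ P * Z
  have hZmul : ∀ z ∈ SZ, ∀ x ∈ P * Z, z * x ∈ P * Z := by
    intro z hz
    induction hz using Algebra.adjoin_induction with
    | mem w hw =>
      obtain ⟨l, hl, rfl⟩ := hw
      intro x hx
      refine Submodule.mul_induction_on hx (fun p hp zz hzz => ?_) (fun x y ihx ihy => ?_)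
      · have key : u0 l * (p * zz)
            = (u0 l * p - p * u0 l) * zz + p * (u0 l * zz) := by noncomm_ring
        rw [key]
        exact add_mem
          (Submodule.mul_mem_mul (comm1 l hl p hp) hzz)
          (Submodule.mul_mem_mul hp (SZ.mul_mem (Algebra.subset_adjoin ⟨l, hl, rfl⟩) hzz))
      · rw [mul_add]; exact add_mem ihx ihy
    | algebraMap r =>
      intro x hx
      rw [← Algebra.smul_def]
      exact Submodule.smul_mem _ r hx
    | add z₁ z₂ h₁ h₂ ih₁ ih₂ =>
      intro x hx
      rw [add_mul]; exact add_mem (ih₁ x hx) (ih₂ x hx)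
    | mul z₁ z₂ h₁ h₂ ih₁ ih₂ =>
      intro x hx
      rw [mul_assoc]
      exact ih₁ _ (ih₂ x hx)
  have hZP : Z * P ≤ P * Z := by
    rw [Submodule.mul_le]
    intro z hz p hp
    have : p * 1 ∈ P * Z := Submodule.mul_mem_mul hp oneZ
    rw [mul_one] at this
    exact hZmul z hz p this
  -- N * Z ≤ Z * N
  have hNmulR : ∀ z ∈ SZ, ∀ x ∈ Z * N, x * z ∈ Z * N := by
    intro z hz
    induction hz using Algebra.adjoin_induction with
    | mem w hw =>
      obtain ⟨l, hl, rfl⟩ := hw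
      intro x hx
      refine Submodule.mul_induction_on hx (fun zz hzz q hq => ?_) (fun x y ihx ihy => ?_)
      · have key : (zz * q) * u0 l
            = zz * (q * u0 l - u0 l * q) + (zz * u0 l) * q := by noncomm_ring
        rw [key]
        exact add_mem
          (Submodule.mul_mem_mul hzz (comm2 l hl q hq))
          (Submodule.mul_mem_mul (SZ.mul_mem hzz (Algebra.subset_adjoin ⟨l, hl, rfl⟩)) hq)
      · rw [add_mul]; exact add_mem ihx ihy
    | algebraMap r =>
      intro x hx
      rw [← Algebra.commutes r, ← Algebra.smul_def]
      exact Submodule.smul_mem _ r hx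
    | add z₁ z₂ h₁ h₂ ih₁ ih₂ =>
      intro x hx
      rw [mul_add]; exact add_mem (ih₁ x hx) (ih₂ x hx)
    | mul z₁ z₂ h₁ h₂ ih₁ ih₂ =>
      intro x hx
      rw [← mul_assoc]
      exact ih₂ _ (ih₁ x hx)
  have hNZ : N * Z ≤ Z * N := by
    rw [Submodule.mul_le]
    intro q hq z hz
    have h1 : (1 : A) * q ∈ Z * N := Submodule.mul_mem_mul oneZ hq
    rw [one_mul] at h1
    exact hNmulR z hz q h1
  have hPP : P * P ≤ P := Submodule.mul_le.2 fun x hx y hy => SP.mul_mem hx hy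
  have hZZ : Z * Z ≤ Z := Submodule.mul_le.2 fun x hx y hy => SZ.mul_mem hx hy
  have hNN : N * N ≤ N := Submodule.mul_le.2 fun x hx y hy => SN.mul_mem hx hy
  set T := P * Z * N with hT
  have hP_T : P ≤ T := by
    intro p hp
    have h2 : (p * 1) * 1 ∈ T := Submodule.mul_mem_mul (Submodule.mul_mem_mul hp oneZ) oneN
    simpa using h2
  have hZ_T : Z ≤ T := by
    intro z hz
    have h2 : ((1 : A) * z) * 1 ∈ T :=
      Submodule.mul_mem_mul (Submodule.mul_mem_mul oneP hz) oneN
    simpa using h2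
  have hN_T : N ≤ T := by
    intro q hq
    have h2 : ((1 : A) * 1) * q ∈ T :=
      Submodule.mul_mem_mul (Submodule.mul_mem_mul oneP oneZ) hq
    simpa using h2
  have hZN_T : Z * N ≤ T := (mul_le_mul_left · _) fun z hz => by
    have h2 : (1 : A) * z ∈ P * Z := Submodule.mul_mem_mul oneP hz
    rwa [one_mul] at h2
  have hPZPZ : (P * Z) * (P * Z) ≤ P * Z := by
    calc (P * Z) * (P * Z) = P * ((Z * P) * Z) := by rw [mul_assoc, mul_assoc]
      _ ≤ P * ((P * Z) * Z) :=
          (mul_le_mul_right · _) ((mul_le_mul_left · _) hZP)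
      _ = (P * P) * (Z * Z) := by rw [mul_assoc, mul_assoc]
      _ ≤ P * Z := mul_le_mul' hPP hZZ
  have hPZT : (P * Z) * T ≤ T := by
    calc (P * Z) * ((P * Z) * N) = ((P * Z) * (P * Z)) * N := (mul_assoc _ _ _).symm
      _ ≤ (P * Z) * N := (mul_le_mul_left · _) hPZPZ
  -- commutator of elements of SN with u1 n lies in Z * N
  have hNZN : N * (Z * N) ≤ Z * N := by
    calc N * (Z * N) = (N * Z) * N := (mul_assoc _ _ _).symm
      _ ≤ (Z * N) * N := (mul_le_mul_left · _) hNZ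
      _ = Z * (N * N) := mul_assoc _ _ _
      _ ≤ Z * N := (mul_le_mul_right · _) hNN
  have hZNN : (Z * N) * N ≤ Z * N := by
    calc (Z * N) * N = Z * (N * N) := mul_assoc _ _ _
      _ ≤ Z * N := (mul_le_mul_right · _) hNN
  have comm3 : ∀ n : ℤ, ∀ x ∈ SN, x * u1 n - u1 n * x ∈ Z * N := by
    intro n x hx
    induction hx using Algebra.adjoin_induction with
    | mem w hw =>
      obtain ⟨m, rfl⟩ := hw
      have hz : um m * u1 n - u1 n * um m ∈ SZ := by
        have h2 : um m * u1 n - u1 n * um m = -(u1 n * um m - um m * u1 n) := by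
          noncomm_ring
        rw [h2]
        exact neg_mem (h1m n m)
      have h3 : (um m * u1 n - u1 n * um m) * 1 ∈ Z * N :=
        Submodule.mul_mem_mul hz oneN
      rwa [mul_one] at h3
    | algebraMap r =>
      rw [← Algebra.commutes r (u1 n), sub_self]
      exact Submodule.zero_mem _
    | add x y hx hy ihx ihy =>
      have h : (x + y) * u1 n - u1 n * (x + y)
          = (x * u1 n - u1 n * x) + (y * u1 n - u1 n * y) := by noncomm_ring
      rw [h]; exact add_mem ihx ihy
    | mul x y hx hy ihx ihy =>
      have h : (x * y) * u1 n - u1 n * (x * y)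
          = x * (y * u1 n - u1 n * y) + (x * u1 n - u1 n * x) * y := by noncomm_ring
      rw [h]
      exact add_mem (hNZN (Submodule.mul_mem_mul hx ihy))
        (hZNN (Submodule.mul_mem_mul ihx hy))
  -- straightening: N times P lands in T
  have hNP : ∀ p ∈ SP, ∀ x ∈ N, x * p ∈ T := by
    intro p hp
    induction hp using Algebra.adjoin_induction with
    | mem w hw =>
      obtain ⟨n, rfl⟩ := hw
      intro x hx
      have key : x * u1 n = (x * u1 n - u1 n * x) + u1 n * x := by noncomm_ring
      rw [key]
      refine add_mem (hZN_T (comm3 n x hx)) ?_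
      have h1 : u1 n * 1 ∈ P * Z :=
        Submodule.mul_mem_mul (Algebra.subset_adjoin (Set.mem_range_self n)) oneZ
      have h2 : (u1 n * 1) * x ∈ T := Submodule.mul_mem_mul h1 hx
      rwa [mul_one] at h2
    | algebraMap r =>
      intro x hx
      rw [← Algebra.commutes r x, ← Algebra.smul_def]
      exact T.smul_mem r (hN_T hx)
    | add p₁ p₂ h₁ h₂ ih₁ ih₂ =>
      intro x hx
      rw [mul_add]
      exact add_mem (ih₁ x hx) (ih₂ x hx)
    | mul p₁ p₂ h₁ h₂ ih₁ ih₂ =>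
      intro x hx
      rw [← mul_assoc]
      refine Submodule.mul_induction_on (C := fun w => w * p₂ ∈ T) (ih₁ x hx)
        (fun w hw q hq => ?_) (fun a b iha ihb => ?_)
      · show w * q * p₂ ∈ T
        rw [mul_assoc]
        exact hPZT (Submodule.mul_mem_mul hw (ih₂ q hq))
      · show (a + b) * p₂ ∈ T
        rw [add_mul]; exact add_mem iha ihb
  have hNPle : N * P ≤ T := Submodule.mul_le.2 fun q hq p hp => hNP p hp q hq
  -- T is closed under multiplication
  have hTZ : T * Z ≤ T := by
    calc ((P * Z) * N) * Z = (P * Z) * (N * Z) := mul_assoc _ _ _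
      _ ≤ (P * Z) * (Z * N) := (mul_le_mul_right · _) hNZ
      _ = ((P * Z) * Z) * N := (mul_assoc _ _ _).symm
      _ = (P * (Z * Z)) * N := by rw [mul_assoc P Z Z]
      _ ≤ (P * Z) * N := (mul_le_mul_left · _) ((mul_le_mul_right · _) hZZ)
  have hTN : T * N ≤ T := by
    calc ((P * Z) * N) * N = (P * Z) * (N * N) := mul_assoc _ _ _
      _ ≤ (P * Z) * N := (mul_le_mul_right · _) hNN
  have hNT : N * T ≤ T := by
    calc N * ((P * Z) * N) = (N * (P * Z)) * N := (mul_assoc _ _ _).symm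
      _ = ((N * P) * Z) * N := by rw [← mul_assoc N P Z]
      _ ≤ (T * Z) * N := (mul_le_mul_left · _) ((mul_le_mul_left · _) hNPle)
      _ ≤ T * N := (mul_le_mul_left · _) hTZ
      _ ≤ T := hTN
  have hTT : T * T ≤ T := by
    calc ((P * Z) * N) * T = (P * Z) * (N * T) := mul_assoc _ _ _
      _ ≤ (P * Z) * T := (mul_le_mul_right · _) hNT
      _ ≤ T := hPZT
  have oneT : (1 : A) ∈ T := hP_T oneP
  have hmulT : ∀ x y : A, x ∈ T → y ∈ T → x * y ∈ T := fun x y hx hy =>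
    hTT (Submodule.mul_mem_mul hx hy)
  have htop : Algebra.adjoin K (Set.range u1 ∪ u0 '' {l : ℤ | l ≠ 0} ∪ Set.range um)
      ≤ T.toSubalgebra oneT hmulT := by
    apply Algebra.adjoin_le
    rintro x ((⟨n, rfl⟩ | ⟨l, hl, rfl⟩) | ⟨n, rfl⟩)
    · exact hP_T (Algebra.subset_adjoin (Set.mem_range_self n))
    · exact hZ_T (Algebra.subset_adjoin ⟨l, hl, rfl⟩)
    · exact hN_T (Algebra.subset_adjoin (Set.mem_range_self n))
  rw [hgen] at htop
  exact Submodule.eq_top_iff'.2 fun x => htop (by trivial)
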